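/- Let B be an alternating bilinear form on the finite 𝔽₂-vector space V with dim V = 2g, let Q denote the set of quadratic refinements of B, let Z : V → ℂ be any function, and for q ∈ Q set D(q) = ∑_{x ∈ V} (−1)^{q(x)} Z(x) and Arf(q) = 2^{−g} ∑_{x ∈ V} (−1)^{q(x)}. Then ∑_{x ∈ V} Z(x) = 2^{−g} ∑_{q ∈ Q} Arf(q) · D(q). (This is the algebraic core of the higher-genus bosonization formula Z = ±2^{−g} ∑_η Arf(η) det K_η.) -/

import Mathlib

open scoped Classical

private lemma sgn_mul (a b : ZMod 2) :
    ((-1:ℂ) ^ a.val) * ((-1:ℂ) ^ b.val) = (-1:ℂ) ^ ((a+b).val) := by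
  rcases (by decide : ∀ a : ZMod 2, a = 0 ∨ a = 1) a with rfl | rfl <;>
    rcases (by decide : ∀ a : ZMod 2, a = 0 ∨ a = 1) b with rfl | rfl <;>
    simp only [show (1+1 : ZMod 2) = 0 by decide, add_zero, zero_add] <;>
    norm_num [ZMod.val_one]

/-- **Algebraic core of higher-genus bosonization.**
Let `B` be an alternating bilinear form on a finite `𝔽₂`-vector space `V` with
`dim V = 2g`, `Q` the set of quadratic refinements of `B`, and `Z : V → ℂ`. With
`D q = ∑ x, (-1)^(q x) * Z x` and `Arf q = 2^(-g) * ∑ x, (-1)^(q x)`, one has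
`∑ x, Z x = 2^(-g) * ∑ q, Arf q * D q`. -/
theorem bosonization_formula {V : Type*} [AddCommGroup V] [Module (ZMod 2) V]
    [Fintype V] (g : ℕ) (hdim : Module.finrank (ZMod 2) V = 2 * g)
    (B : V →ₗ[ZMod 2] V →ₗ[ZMod 2] ZMod 2)
    (halt : ∀ x : V, B x x = 0) (Z : V → ℂ)
    (D Arf : {q : V → ZMod 2 // ∀ x y, q (x + y) = q x + q y + B x y} → ℂ)
    (hD : ∀ q, D q = ∑ x : V, ((-1 : ℂ) ^ (q.1 x).val) * Z x)
    (hArf : ∀ q, Arf q = ((2 : ℂ) ^ g)⁻¹ * ∑ x : V, ((-1 : ℂ) ^ (q.1 x).val)) :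
    ∑ x : V, Z x = ((2 : ℂ) ^ g)⁻¹ *
      ∑ q : {q : V → ZMod 2 // ∀ x y, q (x + y) = q x + q y + B x y},
        Arf q * D q := by
  classical
  set n := Module.finrank (ZMod 2) V with hn
  have htwo : ∀ a : ZMod 2, a + a = 0 := by decide
  have hone : ∀ a : ZMod 2, a ≠ 0 → a = 1 := by decide
  have hxx : ∀ x : V, x + x = 0 := by
    intro x
    have h : ((1:ZMod 2) + 1) • x = 0 := by
      rw [show (1:ZMod 2)+1 = 0 by decide, zero_smul]
    simpa [add_smul, one_smul] using h
  have hsym : ∀ x y : V, B x y = B y x := by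
    intro x y
    have h := halt (x + y)
    simp only [map_add, LinearMap.add_apply, halt x, halt y, zero_add, add_zero] at h
    linear_combination h - htwo (B y x)
  -- existence of a quadratic refinement
  obtain ⟨q₀, hq₀⟩ : ∃ q : V → ZMod 2, ∀ x y, q (x + y) = q x + q y + B x y := by
    obtain ⟨m, ⟨b⟩⟩ : ∃ m, Nonempty (Module.Basis (Fin m) (ZMod 2) V) :=
      ⟨n, ⟨Module.finBasis (ZMod 2) V⟩⟩
    set S : Finset (Fin m × Fin m) := Finset.univ.filter (fun p => p.1 < p.2) with hS
    have hBsum : ∀ x y : V, B x y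
        = ∑ p : Fin m × Fin m, b.repr x p.1 * b.repr y p.2 * B (b p.1) (b p.2) := by
      intro x y
      rw [Fintype.sum_prod_type]
      calc B x y = B (∑ i, b.repr x i • b i) (∑ j, b.repr y j • b j) := by
            rw [b.sum_repr, b.sum_repr]
        _ = ∑ i, ∑ j, b.repr x i * b.repr y j * B (b i) (b j) := by
            simp only [map_sum, map_smul, LinearMap.sum_apply, LinearMap.smul_apply,
              smul_eq_mul, Finset.mul_sum]
            rw [Finset.sum_comm]
            exact Finset.sum_congr rfl fun i _ => Finset.sum_congr rfl fun j _ => by ring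
    refine ⟨fun v => ∑ p ∈ S, b.repr v p.1 * b.repr v p.2 * B (b p.1) (b p.2), ?_⟩
    intro x y
    dsimp only
    have hrep : ∀ p : Fin m, b.repr (x + y) p = b.repr x p + b.repr y p := by
      intro p; rw [map_add]; rfl
    have expand : ∀ p : Fin m × Fin m,
        b.repr (x+y) p.1 * b.repr (x+y) p.2 * B (b p.1) (b p.2)
        = b.repr x p.1 * b.repr x p.2 * B (b p.1) (b p.2)
          + b.repr y p.1 * b.repr y p.2 * B (b p.1) (b p.2)
          + (b.repr x p.1 * b.repr y p.2 * B (b p.1) (b p.2)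
             + b.repr x p.2 * b.repr y p.1 * B (b p.1) (b p.2)) := by
      intro p; rw [hrep, hrep]; ring
    rw [Finset.sum_congr rfl (fun p _ => expand p), Finset.sum_add_distrib,
      Finset.sum_add_distrib]
    congr 1
    rw [hBsum x y, Finset.sum_add_distrib]
    have hswap : (∑ p ∈ S, b.repr x p.2 * b.repr y p.1 * B (b p.1) (b p.2))
        = ∑ p ∈ Finset.univ.filter (fun p : Fin m × Fin m => p.2 < p.1),
            b.repr x p.1 * b.repr y p.2 * B (b p.1) (b p.2) := by
      refine Finset.sum_equiv (Equiv.prodComm (Fin m) (Fin m)) ?_ ?_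
      · intro p; simp [hS]
      · intro p _; simp only [Equiv.prodComm_apply, Prod.fst_swap, Prod.snd_swap]
        rw [hsym (b p.1) (b p.2)]
    rw [hswap]
    have h1 := Finset.sum_filter_add_sum_filter_not Finset.univ
      (fun p : Fin m × Fin m => p.1 < p.2)
      (fun p => b.repr x p.1 * b.repr y p.2 * B (b p.1) (b p.2))
    have h2 := Finset.sum_filter_add_sum_filter_not
      (Finset.univ.filter (fun p : Fin m × Fin m => ¬ p.1 < p.2))
      (fun p => p.2 < p.1)
      (fun p => b.repr x p.1 * b.repr y p.2 * B (b p.1) (b p.2))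
    have hgt : (Finset.univ.filter (fun p : Fin m × Fin m => ¬ p.1 < p.2)).filter
          (fun p => p.2 < p.1)
        = Finset.univ.filter (fun p : Fin m × Fin m => p.2 < p.1) := by
      rw [Finset.filter_filter]
      exact Finset.filter_congr (fun p _ => by
        constructor
        · exact fun h => h.2
        · exact fun h => ⟨not_lt.mpr (le_of_lt h), h⟩)
    have hdiag : (∑ p ∈ (Finset.univ.filter (fun p : Fin m × Fin m => ¬ p.1 < p.2)).filter
          (fun p => ¬ p.2 < p.1),
        b.repr x p.1 * b.repr y p.2 * B (b p.1) (b p.2)) = 0 := by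
      refine Finset.sum_eq_zero fun p hp => ?_
      simp only [Finset.mem_filter] at hp
      have : p.1 = p.2 := le_antisymm (not_lt.mp hp.2) (not_lt.mp hp.1.2)
      rw [this, halt, mul_zero]
    rw [hgt, hdiag, add_zero] at h2
    rw [← h1, ← h2]
  -- Fintype on the dual
  haveI : Fintype (V →ₗ[ZMod 2] ZMod 2) :=
    Fintype.ofInjective (fun f => (f : V → ZMod 2)) DFunLike.coe_injective
  -- refinements vanish at 0
  have hzero : ∀ q : V → ZMod 2, (∀ x y, q (x + y) = q x + q y + B x y) → q 0 = 0 := by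
    intro q hq
    have h := hq 0 0
    simp only [add_zero, map_zero, LinearMap.zero_apply] at h
    linear_combination -h
  -- bijection dual ≃ refinements
  let φ : (V →ₗ[ZMod 2] ZMod 2) →
      {q : V → ZMod 2 // ∀ x y, q (x + y) = q x + q y + B x y} := fun ℓ =>
    ⟨fun x => q₀ x + ℓ x, by intro x y; dsimp only; rw [hq₀, map_add]; ring⟩
  have hφ : Function.Bijective φ := by
    constructor
    · intro ℓ ℓ' h
      ext x
      have h' := congrFun (congrArg (fun q :
        {q : V → ZMod 2 // ∀ x y, q (x + y) = q x + q y + B x y} => q.1) h) x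
      exact add_left_cancel h'
    · intro q
      have hcases : ∀ a : ZMod 2, a = 0 ∨ a = 1 := by decide
      refine ⟨{ toFun := fun x => q₀ x + q.1 x, map_add' := ?_, map_smul' := ?_ }, ?_⟩
      · intro x y; rw [hq₀, q.2]; linear_combination htwo (B x y)
      · intro a x
        rcases hcases a with h | h <;> subst h
        · simp [hzero q₀ hq₀, hzero q.1 q.2]
        · simp
      · apply Subtype.ext
        funext x
        show q₀ x + (q₀ x + q.1 x) = q.1 x
        linear_combination htwo (q₀ x)
  -- card of the dual
  have hcardD : Fintype.card (V →ₗ[ZMod 2] ZMod 2) = 2 ^ n := by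
    rw [Module.card_fintype (Module.finBasis (ZMod 2) V).dualBasis, ZMod.card,
      Fintype.card_fin]
  -- character sums over the dual
  have hT0 : (∑ ℓ : V →ₗ[ZMod 2] ZMod 2, ((-1:ℂ)) ^ (ℓ (0:V)).val) = (2:ℂ) ^ n := by
    simp only [map_zero, ZMod.val_zero, pow_zero]
    rw [Finset.sum_const, Finset.card_univ, hcardD, nsmul_eq_mul, mul_one]
    push_cast
    ring
  have hT : ∀ z : V, z ≠ 0 → (∑ ℓ : V →ₗ[ZMod 2] ZMod 2, ((-1:ℂ)) ^ (ℓ z).val) = 0 := by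
    intro z hz
    obtain ⟨ℓ₀, hℓ₀⟩ : ∃ ℓ₀ : V →ₗ[ZMod 2] ZMod 2, ℓ₀ z ≠ 0 := by
      by_contra hc; push_neg at hc
      exact hz ((Module.forall_dual_apply_eq_zero_iff (ZMod 2) z).mp hc)
    have h1 : ℓ₀ z = 1 := hone _ hℓ₀
    have hre : (∑ ℓ : V →ₗ[ZMod 2] ZMod 2, ((-1:ℂ)) ^ ((ℓ₀ + ℓ) z).val)
        = ∑ ℓ : V →ₗ[ZMod 2] ZMod 2, ((-1:ℂ)) ^ (ℓ z).val :=
      Fintype.sum_equiv (Equiv.addLeft ℓ₀) _ _ (fun ℓ => rfl)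
    have hneg : ∀ ℓ : V →ₗ[ZMod 2] ZMod 2,
        ((-1:ℂ)) ^ ((ℓ₀ + ℓ) z).val = -((-1:ℂ)) ^ ((ℓ) z).val := by
      intro ℓ
      rw [LinearMap.add_apply, h1, ← sgn_mul]
      norm_num [ZMod.val_one]
    have hS : (∑ ℓ : V →ₗ[ZMod 2] ZMod 2, ((-1:ℂ)) ^ (ℓ z).val)
        = -∑ ℓ : V →ₗ[ZMod 2] ZMod 2, ((-1:ℂ)) ^ (ℓ z).val := by
      calc (∑ ℓ : V →ₗ[ZMod 2] ZMod 2, ((-1:ℂ)) ^ (ℓ z).val)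
          = ∑ ℓ : V →ₗ[ZMod 2] ZMod 2, ((-1:ℂ)) ^ ((ℓ₀ + ℓ) z).val := hre.symm
        _ = ∑ ℓ : V →ₗ[ZMod 2] ZMod 2, -((-1:ℂ)) ^ (ℓ z).val :=
            Finset.sum_congr rfl (fun ℓ _ => hneg ℓ)
        _ = -∑ ℓ : V →ₗ[ZMod 2] ZMod 2, ((-1:ℂ)) ^ (ℓ z).val := by
            rw [Finset.sum_neg_distrib]
    linear_combination hS / 2
  -- the key orthogonality relation
  have key : ∀ x y : V,
      (∑ q : {q : V → ZMod 2 // ∀ x y, q (x + y) = q x + q y + B x y},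
        ((-1:ℂ)) ^ (q.1 x).val * ((-1:ℂ)) ^ (q.1 y).val)
      = if x = y then (2:ℂ) ^ n else 0 := by
    intro x y
    have step1 : (∑ q : {q : V → ZMod 2 // ∀ x y, q (x + y) = q x + q y + B x y},
          ((-1:ℂ)) ^ (q.1 x).val * ((-1:ℂ)) ^ (q.1 y).val)
        = ∑ ℓ : V →ₗ[ZMod 2] ZMod 2,
            ((-1:ℂ)) ^ ((φ ℓ).1 x).val * ((-1:ℂ)) ^ ((φ ℓ).1 y).val :=
      (hφ.sum_comp _).symm
    have step2 : (∑ ℓ : V →ₗ[ZMod 2] ZMod 2,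
          ((-1:ℂ)) ^ ((φ ℓ).1 x).val * ((-1:ℂ)) ^ ((φ ℓ).1 y).val)
        = ((-1:ℂ)) ^ (q₀ x).val * ((-1:ℂ)) ^ (q₀ y).val
            * ∑ ℓ : V →ₗ[ZMod 2] ZMod 2, ((-1:ℂ)) ^ ((ℓ (x+y)).val) := by
      rw [Finset.mul_sum]
      refine Finset.sum_congr rfl fun ℓ _ => ?_
      show ((-1:ℂ)) ^ ((q₀ x + ℓ x)).val * ((-1:ℂ)) ^ ((q₀ y + ℓ y)).val = _
      rw [← sgn_mul (q₀ x) (ℓ x), ← sgn_mul (q₀ y) (ℓ y), map_add,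
        ← sgn_mul (ℓ x) (ℓ y)]
      ring
    rw [step1, step2]
    by_cases h : x = y
    · subst h
      have sq : ∀ a : ZMod 2, ((-1:ℂ))^a.val * ((-1:ℂ))^a.val = 1 := by
        intro a; rw [sgn_mul, htwo]; simp
      rw [hxx x, hT0, sq, one_mul, if_pos rfl]
    · rw [if_neg h, hT (x+y) ?_, mul_zero]
      intro h0
      refine h ?_
      have h' := congrArg (fun t => x + t) h0
      simp only [← add_assoc, hxx, zero_add, add_zero] at h'
      exact h'.symm
  -- assemble
  have hsum : (∑ q : {q : V → ZMod 2 // ∀ x y, q (x + y) = q x + q y + B x y},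
      Arf q * D q) = (2:ℂ)^g * ∑ x : V, Z x := by
    have hrw : ∀ q : {q : V → ZMod 2 // ∀ x y, q (x + y) = q x + q y + B x y},
        Arf q * D q = ((2:ℂ)^g)⁻¹
          * ∑ x : V, ∑ y : V,
              ((-1:ℂ))^(q.1 x).val * ((-1:ℂ))^(q.1 y).val * Z y := by
      intro q
      rw [hArf, hD, mul_assoc, Finset.sum_mul_sum]
      congr 1
      exact Finset.sum_congr rfl fun x _ => Finset.sum_congr rfl fun y _ => by ring
    rw [Finset.sum_congr rfl (fun q _ => hrw q), ← Finset.mul_sum]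
    rw [Finset.sum_comm]
    have hinner : ∀ x : V,
        (∑ q : {q : V → ZMod 2 // ∀ x y, q (x + y) = q x + q y + B x y},
          ∑ y : V, ((-1:ℂ))^(q.1 x).val * ((-1:ℂ))^(q.1 y).val * Z y)
        = (2:ℂ)^n * Z x := by
      intro x
      rw [Finset.sum_comm]
      have : ∀ y : V,
          (∑ q : {q : V → ZMod 2 // ∀ x y, q (x + y) = q x + q y + B x y},
            ((-1:ℂ))^(q.1 x).val * ((-1:ℂ))^(q.1 y).val * Z y)
          = (if x = y then (2:ℂ)^n else 0) * Z y := by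
        intro y
        rw [← Finset.sum_mul, key x y]
      rw [Finset.sum_congr rfl (fun y _ => this y)]
      simp [ite_mul, Finset.sum_ite_eq]
    rw [Finset.sum_congr rfl (fun x _ => hinner x), ← Finset.mul_sum]
    rw [← mul_assoc]
    have h2n : (2:ℂ)^n = (2:ℂ)^g * (2:ℂ)^g := by
      rw [← pow_add, hdim]; ring_nf
    rw [h2n]
    have h2g : ((2:ℂ)^g) ≠ 0 := pow_ne_zero _ two_ne_zero
    field_simp
  rw [hsum, ← mul_assoc]
  have h2g : ((2:ℂ)^g) ≠ 0 := pow_ne_zero _ two_ne_zero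
  field_simp
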